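/- Let (X,T) and (Y,S) be Γ-dynamical systems and f : X → Y a continuous equivariant map. Then f is an almost embedding (i.e. for every invariant μ ∈ Prob(X,T), f induces a measure-theoretic isomorphism between (X,T,μ) and (Y,S,f_*μ)) if and only if every (T×T)-invariant Borel probability measure on the fiber product X ×_f X = {(x_1,x_2) ∈ X×X : f(x_1)=f(x_2)} is supported on the diagonal Δ_X = {(x,x) : x ∈ X}. -/

import Mathlib

open MeasureTheory Set ProbabilityTheory
open scoped ENNReal

/-- The set of T-invariant Borel probability measures. -/
def invProb {X Γ : Type*} [TopologicalSpace X] [MeasurableSpace X]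
    (T : Γ → X ≃ₜ X) : Set (ProbabilityMeasure X) :=
  {μ | ∀ γ : Γ, (μ : Measure X).map (T γ) = (μ : Measure X)}

lemma aux_ae_eq_one {α : Type*} [MeasurableSpace α] (ν : Measure α) [IsProbabilityMeasure ν]
    {g : α → ℝ≥0∞} (hm : Measurable g) (hle : ∀ a, g a ≤ 1)
    (h : ∫⁻ a, g a ∂ν = 1) : ∀ᵐ a ∂ν, g a = 1 := by
  have hsub : ∫⁻ a, (1 - g a) ∂ν = 0 := by
    rw [lintegral_sub hm (by rw [h]; exact ENNReal.one_ne_top)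
      (Filter.Eventually.of_forall hle), h, lintegral_one, measure_univ, tsub_self]
  have h0 := (lintegral_eq_zero_iff (measurable_const.sub hm)).mp hsub
  filter_upwards [h0] with a ha
  exact le_antisymm (hle a) (tsub_eq_zero_iff_le.mp ha)

/-- Characterization of almost embeddings: a continuous equivariant map f : X → Y is an
almost embedding (i.e. for every invariant μ, f is injective on a Borel set of full
μ-measure, so that f induces a measure-theoretic isomorphism with respect to any
invariant measure) iff every (T×T)-invariant Borel probability measure on X × X giving
full mass to the fiber product {(x₁,x₂) : f(x₁) = f(x₂)} is supported on the diagonal. -/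
theorem stmt18 {X Y Γ : Type*}
    [MetricSpace X] [CompactSpace X] [MeasurableSpace X] [BorelSpace X]
    [MetricSpace Y] [CompactSpace Y] [MeasurableSpace Y] [BorelSpace Y]
    [Group Γ] [Countable Γ] (T : Γ → X ≃ₜ X) (S : Γ → Y ≃ₜ Y)
    (hT : ∀ γ γ' : Γ, ∀ x : X, T (γ * γ') x = T γ (T γ' x))
    (hS : ∀ γ γ' : Γ, ∀ y : Y, S (γ * γ') y = S γ (S γ' y))
    (f : X → Y) (hf : Continuous f)
    (hequiv : ∀ γ : Γ, ∀ x : X, f (T γ x) = S γ (f x)) :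
    (∀ μ : ProbabilityMeasure X, μ ∈ invProb T →
      ∃ B : Set X, MeasurableSet B ∧ (μ : Measure X) B = 1 ∧ Set.InjOn f B) ↔
    (∀ lam : ProbabilityMeasure (X × X),
      (∀ γ : Γ, (lam : Measure (X × X)).map (fun p => (T γ p.1, T γ p.2)) =
        (lam : Measure (X × X))) →
      (lam : Measure (X × X)) {p : X × X | f p.1 = f p.2} = 1 →
      (lam : Measure (X × X)) {p : X × X | p.1 = p.2} = 1) := by
  have hfm : Measurable f := hf.measurable
  have hTm : ∀ γ : Γ, Measurable (T γ) := fun γ => (T γ).continuous.measurable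
  have hSm : ∀ γ : Γ, Measurable (S γ) := fun γ => (S γ).continuous.measurable
  have hFm : ∀ γ : Γ, Measurable (fun p : X × X => (T γ p.1, T γ p.2)) := fun γ =>
    ((hTm γ).comp measurable_fst).prodMk ((hTm γ).comp measurable_snd)
  have hGFm : ∀ γ : Γ, Measurable (fun p : Y × X => (S γ p.1, T γ p.2)) := fun γ =>
    ((hSm γ).comp measurable_fst).prodMk ((hTm γ).comp measurable_snd)
  -- diagonal and fiber product are measurable
  have hDm : MeasurableSet {p : X × X | p.1 = p.2} :=
    (isClosed_eq continuous_fst continuous_snd).measurableSet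
  have hCm : MeasurableSet {p : X × X | f p.1 = f p.2} :=
    (isClosed_eq (hf.comp continuous_fst) (hf.comp continuous_snd)).measurableSet
  -- group identities
  have hT1 : ∀ x : X, T (1 : Γ) x = x := by
    intro x
    have h1 := hT 1 1 x
    rw [one_mul] at h1
    exact ((T (1:Γ)).injective h1.symm)
  have hS1 : ∀ y : Y, S (1 : Γ) y = y := by
    intro y
    have h1 := hS 1 1 y
    rw [one_mul] at h1
    exact ((S (1:Γ)).injective h1.symm)
  have hTinv : ∀ γ : Γ, ∀ x : X, T γ (T γ⁻¹ x) = x := by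
    intro γ x; rw [← hT γ γ⁻¹ x, mul_inv_cancel, hT1]
  have hSinv : ∀ γ : Γ, ∀ y : Y, S γ (S γ⁻¹ y) = y := by
    intro γ y; rw [← hS γ γ⁻¹ y, mul_inv_cancel, hS1]
  have hSinv' : ∀ γ : Γ, ∀ y : Y, S γ⁻¹ (S γ y) = y := by
    intro γ y; rw [← hS γ⁻¹ γ y, inv_mul_cancel, hS1]
  constructor
  · -- easy direction
    intro hemb lam hinv hfib
    set lm : Measure (X × X) := (lam : Measure (X × X)) with hlm
    haveI : IsProbabilityMeasure lm := lam.2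
    set μ1 : Measure X := lm.map Prod.fst with hμ1
    set μ2 : Measure X := lm.map Prod.snd with hμ2
    haveI : IsProbabilityMeasure μ1 := Measure.isProbabilityMeasure_map measurable_fst.aemeasurable
    haveI : IsProbabilityMeasure μ2 := Measure.isProbabilityMeasure_map measurable_snd.aemeasurable
    set m : Measure X := (2 : ℝ≥0∞)⁻¹ • (μ1 + μ2) with hm
    haveI hmprob : IsProbabilityMeasure m := by
      constructor
      rw [hm]
      simp only [Measure.smul_apply, Measure.add_apply, measure_univ, smul_eq_mul]
      rw [one_add_one_eq_two, ENNReal.inv_mul_cancel (by norm_num) (by norm_num)]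
    have hminv : ∀ γ : Γ, m.map (T γ) = m := by
      intro γ
      have h1 : μ1.map (T γ) = μ1 := by
        rw [hμ1, Measure.map_map (hTm γ) measurable_fst]
        have : (T γ) ∘ Prod.fst = Prod.fst ∘ (fun p : X × X => (T γ p.1, T γ p.2)) := rfl
        rw [this, ← Measure.map_map measurable_fst (hFm γ), hinv γ]
      have h2 : μ2.map (T γ) = μ2 := by
        rw [hμ2, Measure.map_map (hTm γ) measurable_snd]
        have : (T γ) ∘ Prod.snd = Prod.snd ∘ (fun p : X × X => (T γ p.1, T γ p.2)) := rfl
        rw [this, ← Measure.map_map measurable_snd (hFm γ), hinv γ]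
      rw [hm, Measure.map_smul, Measure.map_add _ _ (hTm γ), h1, h2]
    obtain ⟨B, hBm, hB1, hBinj⟩ := hemb ⟨m, hmprob⟩ (fun γ => hminv γ)
    have hBc : m Bᶜ = 0 := (prob_compl_eq_zero_iff hBm).mpr hB1
    have hBc12 : μ1 Bᶜ = 0 ∧ μ2 Bᶜ = 0 := by
      rw [hm] at hBc
      simp only [Measure.smul_apply, Measure.add_apply, smul_eq_mul] at hBc
      have := (mul_eq_zero.mp hBc).resolve_left (by norm_num)
      exact ⟨by simpa using (add_eq_zero.mp this).1, by simpa using (add_eq_zero.mp this).2⟩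
    have hsub : {p : X × X | p.1 = p.2}ᶜ ⊆
        {p : X × X | f p.1 = f p.2}ᶜ ∪ (Prod.fst ⁻¹' Bᶜ ∪ Prod.snd ⁻¹' Bᶜ) := by
      intro p hp
      by_contra hcon
      simp only [mem_union, mem_preimage, mem_compl_iff, mem_setOf_eq, not_or] at hcon
      rcases hcon with ⟨h1, h2, h3⟩
      simp only [not_not] at h1 h2 h3
      exact hp (hBinj h2 h3 h1)
    rw [← prob_compl_eq_zero_iff hDm]
    refine le_antisymm ?_ zero_le
    calc lm {p : X × X | p.1 = p.2}ᶜ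
        ≤ lm ({p : X × X | f p.1 = f p.2}ᶜ ∪ (Prod.fst ⁻¹' Bᶜ ∪ Prod.snd ⁻¹' Bᶜ)) :=
          measure_mono hsub
      _ ≤ lm {p : X × X | f p.1 = f p.2}ᶜ + (lm (Prod.fst ⁻¹' Bᶜ) + lm (Prod.snd ⁻¹' Bᶜ)) :=
          le_trans (measure_union_le _ _) (by gcongr; exact measure_union_le _ _)
      _ = 0 := by
          rw [(prob_compl_eq_zero_iff hCm).mpr hfib,
            ← Measure.map_apply measurable_fst hBm.compl,
            ← Measure.map_apply measurable_snd hBm.compl, ← hμ1, ← hμ2,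
            hBc12.1, hBc12.2]
          simp
  · -- hard direction
    intro hdiag μP hμinv
    set μ : Measure X := (μP : Measure X) with hμdef
    haveI : IsProbabilityMeasure μ := μP.2
    haveI : Nonempty X := by
      by_contra hne
      rw [not_nonempty_iff] at hne
      have h1 : μ univ = 1 := measure_univ
      rw [univ_eq_empty_iff.mpr hne, measure_empty] at h1
      exact zero_ne_one h1
    have hμT : ∀ γ : Γ, μ.map (T γ) = μ := hμinv
    -- the graph measure ρ on Y × X
    have hgm : Measurable (fun x : X => (f x, x)) := hfm.prodMk measurable_id
    set ρ : Measure (Y × X) := μ.map (fun x => (f x, x)) with hρdef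
    haveI : IsProbabilityMeasure ρ := Measure.isProbabilityMeasure_map hgm.aemeasurable
    set ν : Measure Y := ρ.fst with hνdef
    have hνf : ν = μ.map f := Measure.fst_map_prodMk measurable_id
    haveI : IsProbabilityMeasure ν := by rw [hνf]; exact Measure.isProbabilityMeasure_map hfm.aemeasurable
    have hνS : ∀ γ : Γ, ν.map (S γ) = ν := by
      intro γ
      rw [hνf, Measure.map_map (hSm γ) hfm]
      have : (S γ) ∘ f = f ∘ (T γ) := by funext x; exact (hequiv γ x).symm
      rw [this, ← Measure.map_map hfm (hTm γ), hμT γ]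
    set κ : Kernel Y X := ρ.condKernel with hκdef
    have hdis : ν ⊗ₘ κ = ρ := ρ.disintegrate _
    -- ρ is invariant under (S γ, T γ)
    have hρinv : ∀ γ : Γ, ρ.map (fun p : Y × X => (S γ p.1, T γ p.2)) = ρ := by
      intro γ
      rw [hρdef, Measure.map_map (hGFm γ) hgm]
      have : (fun p : Y × X => (S γ p.1, T γ p.2)) ∘ (fun x : X => (f x, x)) =
          (fun x : X => (f x, x)) ∘ (T γ) := by
        funext x
        simp [hequiv γ x]
      rw [this, ← Measure.map_map hgm (hTm γ), hμT γ]
    -- equivariance of the conditional kernel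
    have hκequiv : ∀ γ : Γ, ∀ᵐ y ∂ν, (κ (S γ⁻¹ y)).map (T γ) = κ y := by
      intro γ
      set κγ : Kernel Y X := Kernel.map (κ.comap (S γ⁻¹) (hSm γ⁻¹)) (T γ) with hκγdef
      haveI : IsMarkovKernel κγ := Kernel.IsMarkovKernel.map _ (hTm γ)
      have hκγρ : ρ = ρ.fst ⊗ₘ κγ := by
        rw [← hνdef]
        refine Measure.ext fun s hs => ?_
        rw [Measure.compProd_apply hs]
        have hrw : ∀ y, κγ y (Prod.mk y ⁻¹' s) = κ (S γ⁻¹ y)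
            ((T γ) ⁻¹' (Prod.mk y ⁻¹' s)) := by
          intro y
          rw [hκγdef, Kernel.map_apply _ (hTm γ), Kernel.comap_apply,
            Measure.map_apply (hTm γ) (measurable_prodMk_left hs)]
        simp_rw [hrw]
        have hmble : Measurable (fun y => κγ y (Prod.mk y ⁻¹' s)) :=
          Kernel.measurable_kernel_prodMk_left hs
        simp_rw [hrw] at hmble
        symm
        calc ∫⁻ y, κ (S γ⁻¹ y) ((T γ) ⁻¹' (Prod.mk y ⁻¹' s)) ∂ν
            = ∫⁻ y, κ (S γ⁻¹ y) ((T γ) ⁻¹' (Prod.mk y ⁻¹' s)) ∂(ν.map (S γ)) := by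
              rw [hνS γ]
          _ = ∫⁻ z, κ (S γ⁻¹ (S γ z)) ((T γ) ⁻¹' (Prod.mk (S γ z) ⁻¹' s)) ∂ν := by
              rw [lintegral_map hmble (hSm γ)]
          _ = ∫⁻ z, κ z {x | (S γ z, T γ x) ∈ s} ∂ν := by
              refine lintegral_congr fun z => ?_
              rw [hSinv' γ z]
              rfl
          _ = (ν ⊗ₘ κ) ((fun p : Y × X => (S γ p.1, T γ p.2)) ⁻¹' s) := by
              rw [Measure.compProd_apply ((hGFm γ) hs)]
              rfl
          _ = ρ s := by
              rw [hdis, ← Measure.map_apply (hGFm γ) hs, hρinv γ]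
      have huniq := eq_condKernel_of_measure_eq_compProd κγ hκγρ
      rw [← hνdef] at huniq
      filter_upwards [huniq] with y hy
      rw [← hy, hκγdef, Kernel.map_apply _ (hTm γ), Kernel.comap_apply]
    -- a.e. fiber support
    have hsupp : ∀ᵐ y ∂ν, κ y {x | f x = y} = 1 := by
      have hGm : MeasurableSet {p : Y × X | f p.2 = p.1} :=
        (isClosed_eq (hf.comp continuous_snd) continuous_fst).measurableSet
      have hρG : ρ {p : Y × X | f p.2 = p.1}ᶜ = 0 := by
        rw [hρdef, Measure.map_apply hgm hGm.compl]
        convert measure_empty (μ := μ)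
        ext x
        simp
      rw [← hdis, Measure.compProd_apply hGm.compl] at hρG
      have h0 := (lintegral_eq_zero_iff
        (Kernel.measurable_kernel_prodMk_left hGm.compl)).mp hρG
      filter_upwards [h0] with y hy
      have : Prod.mk y ⁻¹' {p : Y × X | f p.2 = p.1}ᶜ = {x | f x = y}ᶜ := by
        ext x; simp [eq_comm]
      rw [this] at hy
      haveI : IsProbabilityMeasure (κ y) := IsMarkovKernel.isProbabilityMeasure y
      exact (prob_compl_eq_zero_iff (hfm (measurableSet_singleton y))).mp hy
    -- the relatively independent self-joining
    set lm : Measure (X × X) := (ν ⊗ₘ (κ ×ₖ κ)).snd with hlmdef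
    haveI : IsProbabilityMeasure lm := by
      rw [hlmdef]; infer_instance
    have hlmapply : ∀ s : Set (X × X), MeasurableSet s →
        lm s = ∫⁻ y, ((κ y).prod (κ y)) s ∂ν := by
      intro s hs
      rw [hlmdef, Measure.snd_apply hs, Measure.compProd_apply (measurable_snd hs)]
      refine lintegral_congr fun y => ?_
      rw [Kernel.prod_apply]
      rfl
    -- invariance of lm
    have hlminv : ∀ γ : Γ, lm.map (fun p : X × X => (T γ p.1, T γ p.2)) = lm := by
      intro γ
      refine Measure.ext fun s hs => ?_
      have hpre : MeasurableSet ((fun p : X × X => (T γ p.1, T γ p.2)) ⁻¹' s) := hFm γ hs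
      rw [Measure.map_apply (hFm γ) hs, hlmapply _ hpre, hlmapply s hs]
      have hHm : Measurable (fun z => ((κ z).prod (κ z))
          ((fun p : X × X => (T γ p.1, T γ p.2)) ⁻¹' s)) := by
        have := Kernel.measurable_coe (κ ×ₖ κ) hpre
        simpa [Kernel.prod_apply] using this
      calc ∫⁻ y, ((κ y).prod (κ y)) ((fun p : X × X => (T γ p.1, T γ p.2)) ⁻¹' s) ∂ν
          = ∫⁻ y, ((κ y).prod (κ y)) ((fun p : X × X => (T γ p.1, T γ p.2)) ⁻¹' s)
              ∂(ν.map (S γ⁻¹)) := by rw [hνS γ⁻¹]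
        _ = ∫⁻ y, ((κ (S γ⁻¹ y)).prod (κ (S γ⁻¹ y)))
              ((fun p : X × X => (T γ p.1, T γ p.2)) ⁻¹' s) ∂ν := by
            rw [lintegral_map hHm (hSm γ⁻¹)]
        _ = ∫⁻ y, ((κ y).prod (κ y)) s ∂ν := by
            refine lintegral_congr_ae ?_
            filter_upwards [hκequiv γ] with y hy
            have hmap : ∀ (m : Measure X), IsProbabilityMeasure m →
                ((m.map (T γ)).prod (m.map (T γ))) s =
                (m.prod m) ((fun p : X × X => (T γ p.1, T γ p.2)) ⁻¹' s) := by
              intro m hm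
              haveI := hm
              rw [Measure.map_prod_map _ _ (hTm γ) (hTm γ),
                Measure.map_apply ((hTm γ).prodMap (hTm γ)) hs]
              rfl
            haveI : IsProbabilityMeasure (κ (S γ⁻¹ y)) :=
              IsMarkovKernel.isProbabilityMeasure _
            rw [← hy, hmap (κ (S γ⁻¹ y)) inferInstance]
    -- lm gives full mass to the fiber product
    have hlmfib : lm {p : X × X | f p.1 = f p.2} = 1 := by
      rw [hlmapply _ hCm]
      have : ∀ᵐ y ∂ν, ((κ y).prod (κ y)) {p : X × X | f p.1 = f p.2} = 1 := by
        filter_upwards [hsupp] with y hy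
        haveI : IsProbabilityMeasure (κ y) := IsMarkovKernel.isProbabilityMeasure y
        refine le_antisymm prob_le_one ?_
        have hsub : {x | f x = y} ×ˢ {x | f x = y} ⊆ {p : X × X | f p.1 = f p.2} := by
          rintro ⟨x1, x2⟩ ⟨h1, h2⟩
          simp only [mem_setOf_eq] at h1 h2 ⊢
          rw [h1, h2]
        calc (1 : ℝ≥0∞) = κ y {x | f x = y} * κ y {x | f x = y} := by rw [hy, one_mul]
          _ = ((κ y).prod (κ y)) ({x | f x = y} ×ˢ {x | f x = y}) :=
              (Measure.prod_prod _ _).symm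
          _ ≤ ((κ y).prod (κ y)) {p : X × X | f p.1 = f p.2} := measure_mono hsub
      rw [lintegral_congr_ae this, lintegral_one, measure_univ]
    -- apply the hypothesis
    have hlmdiag : lm {p : X × X | p.1 = p.2} = 1 :=
      hdiag ⟨lm, inferInstance⟩ hlminv hlmfib
    -- extract: a.e. y, κ y is a point mass
    have hpoint : ∀ᵐ y ∂ν, ∀ᵐ x ∂(κ y), κ y {x} = 1 := by
      rw [hlmapply _ hDm] at hlmdiag
      have hae := aux_ae_eq_one ν (by
          have := Kernel.measurable_coe (κ ×ₖ κ) hDm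
          simpa [Kernel.prod_apply] using this)
        (fun y => by
          haveI : IsProbabilityMeasure (κ y) := IsMarkovKernel.isProbabilityMeasure y
          exact prob_le_one) hlmdiag
      filter_upwards [hae] with y hy
      haveI : IsProbabilityMeasure (κ y) := IsMarkovKernel.isProbabilityMeasure y
      rw [Measure.prod_apply hDm] at hy
      have hpre : ∀ x : X, (Prod.mk x ⁻¹' {p : X × X | p.1 = p.2}) = {x} := by
        intro x; ext z; simp [eq_comm]
      simp_rw [hpre] at hy
      have hmeas : Measurable (fun x : X => κ y {x}) := by
        have := measurable_measure_prodMk_left (ν := κ y) hDm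
        simpa [hpre] using this
      exact aux_ae_eq_one (κ y) hmeas (fun x => prob_le_one) hy
    -- the good set B
    set B : Set X := {x | κ (f x) {x} = 1} with hBdef
    have hpre : ∀ x : X, (Prod.mk x ⁻¹' {p : X × X | p.1 = p.2}) = {x} := by
      intro x; ext z; simp [eq_comm]
    have hBmeas : MeasurableSet B := by
      have hk : Measurable (fun x : X => (κ.comap f hfm) x
          (Prod.mk x ⁻¹' {p : X × X | p.1 = p.2})) :=
        Kernel.measurable_kernel_prodMk_left hDm
      simp_rw [Kernel.comap_apply, hpre] at hk
      exact hk (measurableSet_singleton 1)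
    refine ⟨B, hBmeas, ?_, ?_⟩
    · -- μ B = 1
      have hμρ : ρ.snd = μ := by
        rw [hρdef, Measure.snd_map_prodMk hfm, Measure.map_id']
      show μ B = 1
      rw [← hμρ, Measure.snd_apply hBmeas, ← hdis,
        Measure.compProd_apply (measurable_snd hBmeas)]
      have hae : ∀ᵐ y ∂ν, κ y (Prod.mk y ⁻¹' (Prod.snd ⁻¹' B)) = 1 := by
        filter_upwards [hsupp, hpoint] with y hy hpt
        haveI : IsProbabilityMeasure (κ y) := IsMarkovKernel.isProbabilityMeasure y
        have hmeasfib : MeasurableSet {x : X | f x = y} := hfm (measurableSet_singleton y)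
        have hyfib : ∀ᵐ x ∂(κ y), f x = y := by
          rw [ae_iff]
          show κ y {x | f x = y}ᶜ = 0
          rw [measure_compl hmeasfib (measure_ne_top _ _), measure_univ, hy, tsub_self]
        have hBae : ∀ᵐ x ∂(κ y), x ∈ B := by
          filter_upwards [hyfib, hpt] with x hx1 hx2
          show κ (f x) {x} = 1
          rw [hx1]; exact hx2
        have : Prod.mk y ⁻¹' (Prod.snd ⁻¹' B) = B := rfl
        rw [this, ← prob_compl_eq_zero_iff hBmeas]
        exact ae_iff.mp hBae
      rw [lintegral_congr_ae hae, lintegral_one, measure_univ]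
    · -- injectivity on B
      intro x1 hx1 x2 hx2 hfx
      by_contra hne
      have h1 : κ (f x1) {x1} = 1 := hx1
      have h2 : κ (f x1) {x2} = 1 := by rw [hfx]; exact hx2
      haveI : IsProbabilityMeasure (κ (f x1)) := IsMarkovKernel.isProbabilityMeasure _
      have hunion : κ (f x1) ({x1} ∪ {x2}) = 2 := by
        rw [measure_union (by simpa using hne) (measurableSet_singleton x2), h1, h2]
        norm_num
      have hle : κ (f x1) ({x1} ∪ {x2}) ≤ 1 := prob_le_one
      rw [hunion] at hle
      norm_num at hle
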